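/- arXiv:2109.13294 — 2 statements merged into one kernel-verified Lean document; each statement's English description precedes it below -/
import Mathlib

section
/- Let f ∈ ℂ[[x,y]] be a nonzero formal power series, let A be a nonempty finite subset of ℝ≥0², set 𝒜 := A + ℝ≥0², and let ξ > 0 be a rational number. Then 𝒜 is contained in the interior of the dilated Newton polygon ξ·𝒩(f) if and only if for every nonzero vector v ∈ ℝ≥0² one has min_{a∈A} ⟨v,a⟩ > ξ·Φ_{𝒩(f)}(v). -/
open scoped Pointwise

noncomputable section

/-- The standard inner (dot) product on ℝ². -/
def dot2 (v u : ℝ × ℝ) : ℝ := v.1 * u.1 + v.2 * u.2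

/-- The nonnegative quadrant ℝ≥0² in ℝ². -/
def quadrant2 : Set (ℝ × ℝ) := {u | 0 ≤ u.1 ∧ 0 ≤ u.2}

/-- The support of a power series f ∈ ℂ[[x,y]], viewed as a subset of ℝ². -/
def psupp (f : MvPowerSeries (Fin 2) ℂ) : Set (ℝ × ℝ) :=
  {p | ∃ d : Fin 2 →₀ ℕ, MvPowerSeries.coeff d f ≠ 0 ∧ p = ((d 0 : ℝ), (d 1 : ℝ))}

/-- The Newton polygon 𝒩(f) = conv(supp f) + ℝ≥0². -/
def newtonPoly (f : MvPowerSeries (Fin 2) ℂ) : Set (ℝ × ℝ) :=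
  convexHull ℝ (psupp f) + quadrant2

/-- The support function Φ_{𝒩(f)}(v) = inf{⟨v,u⟩ : u ∈ 𝒩(f)}. -/
def suppFn (f : MvPowerSeries (Fin 2) ℂ) (v : ℝ × ℝ) : ℝ :=
  sInf (dot2 v '' newtonPoly f)

/-- The monomial order ord_v(f) = min{⟨v,d⟩ : d ∈ supp f}. -/
def ordV (v : ℝ × ℝ) (f : MvPowerSeries (Fin 2) ℂ) : ℝ :=
  sInf (dot2 v '' psupp f)

/- ### Auxiliary lemmas -/

lemma quadrant2_zero_mem : (0 : ℝ × ℝ) ∈ quadrant2 := ⟨le_refl 0, le_refl 0⟩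

lemma quadrant2_add_mem {p q : ℝ × ℝ} (hp : p ∈ quadrant2) (hq : q ∈ quadrant2) :
    p + q ∈ quadrant2 := ⟨add_nonneg hp.1 hq.1, add_nonneg hp.2 hq.2⟩

lemma quadrant2_smul_mem {c : ℝ} (hc : 0 ≤ c) {p : ℝ × ℝ} (hp : p ∈ quadrant2) :
    c • p ∈ quadrant2 := ⟨mul_nonneg hc hp.1, mul_nonneg hc hp.2⟩

lemma quadrant2_convex : Convex ℝ quadrant2 := by
  intro p hp q hq a b ha hb _
  exact quadrant2_add_mem (quadrant2_smul_mem ha hp) (quadrant2_smul_mem hb hq)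

lemma dot2_nonneg {v u : ℝ × ℝ} (hv : v ∈ quadrant2) (hu : u ∈ quadrant2) :
    0 ≤ dot2 v u :=
  add_nonneg (mul_nonneg hv.1 hu.1) (mul_nonneg hv.2 hu.2)

lemma dot2_add_right (v p q : ℝ × ℝ) : dot2 v (p + q) = dot2 v p + dot2 v q := by
  simp only [dot2, Prod.fst_add, Prod.snd_add]; ring

lemma dot2_smul_right (v : ℝ × ℝ) (c : ℝ) (p : ℝ × ℝ) : dot2 v (c • p) = c * dot2 v p := by
  simp only [dot2, Prod.smul_fst, Prod.smul_snd, smul_eq_mul]; ring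

lemma psupp_nonempty {f : MvPowerSeries (Fin 2) ℂ} (hf : f ≠ 0) : (psupp f).Nonempty := by
  have : ¬ ∀ d : Fin 2 →₀ ℕ, MvPowerSeries.coeff d f = 0 := by
    intro h
    apply hf
    ext d
    simp [h d]
  push_neg at this
  obtain ⟨d, hd⟩ := this
  exact ⟨((d 0 : ℝ), (d 1 : ℝ)), d, hd, rfl⟩

lemma psupp_subset_quadrant (f : MvPowerSeries (Fin 2) ℂ) : psupp f ⊆ quadrant2 := by
  rintro p ⟨d, _, rfl⟩
  exact ⟨Nat.cast_nonneg _, Nat.cast_nonneg _⟩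

lemma newtonPoly_nonempty {f : MvPowerSeries (Fin 2) ℂ} (hf : f ≠ 0) :
    (newtonPoly f).Nonempty := by
  obtain ⟨p, hp⟩ := psupp_nonempty hf
  exact ⟨p + 0, Set.add_mem_add (subset_convexHull ℝ _ hp) quadrant2_zero_mem⟩

lemma newtonPoly_convex (f : MvPowerSeries (Fin 2) ℂ) : Convex ℝ (newtonPoly f) :=
  (convex_convexHull ℝ _).add quadrant2_convex

lemma newtonPoly_subset_quadrant (f : MvPowerSeries (Fin 2) ℂ) :
    newtonPoly f ⊆ quadrant2 := by
  rintro p ⟨c, hc, q, hq, rfl⟩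
  exact quadrant2_add_mem
    (convexHull_min (psupp_subset_quadrant f) quadrant2_convex hc) hq

lemma newtonPoly_add_quadrant_mem {f : MvPowerSeries (Fin 2) ℂ} {n q : ℝ × ℝ}
    (hn : n ∈ newtonPoly f) (hq : q ∈ quadrant2) : n + q ∈ newtonPoly f := by
  obtain ⟨c, hc, q', hq', rfl⟩ := hn
  exact ⟨c, hc, q' + q, quadrant2_add_mem hq' hq, (add_assoc _ _ _).symm⟩

/-- Membership in the dilated Newton polygon is stable under adding quadrant elements. -/
lemma smul_newton_add_quadrant_mem {f : MvPowerSeries (Fin 2) ℂ} {ξ : ℝ} (hξ : 0 < ξ)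
    {x q : ℝ × ℝ} (hx : x ∈ ξ • newtonPoly f) (hq : q ∈ quadrant2) :
    x + q ∈ ξ • newtonPoly f := by
  obtain ⟨n, hn, rfl⟩ := hx
  refine ⟨n + ξ⁻¹ • q, newtonPoly_add_quadrant_mem hn
    (quadrant2_smul_mem (by positivity) hq), ?_⟩
  show ξ • (n + ξ⁻¹ • q) = ξ • n + q
  rw [smul_add, smul_inv_smul₀ hξ.ne']

lemma image_smul_newton (f : MvPowerSeries (Fin 2) ℂ) (v : ℝ × ℝ) (ξ : ℝ) :
    dot2 v '' (ξ • newtonPoly f) = ξ • (dot2 v '' newtonPoly f) := by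
  ext r
  constructor
  · rintro ⟨u, ⟨n, hn, rfl⟩, rfl⟩
    exact ⟨dot2 v n, ⟨n, hn, rfl⟩, (dot2_smul_right v ξ n).symm⟩
  · rintro ⟨s, ⟨n, hn, rfl⟩, rfl⟩
    exact ⟨ξ • n, ⟨n, hn, rfl⟩, dot2_smul_right v ξ n⟩

lemma sInf_image_smul_newton (f : MvPowerSeries (Fin 2) ℂ) (v : ℝ × ℝ) {ξ : ℝ} (hξ : 0 ≤ ξ) :
    sInf (dot2 v '' (ξ • newtonPoly f)) = ξ * suppFn f v := by
  rw [image_smul_newton f v ξ, Real.sInf_smul_of_nonneg hξ, smul_eq_mul, suppFn]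

/-- The dot product with a quadrant vector is bounded below by 0 on the dilated
Newton polygon. -/
lemma dot2_smul_newton_bddBelow (f : MvPowerSeries (Fin 2) ℂ) {v : ℝ × ℝ}
    (hv : v ∈ quadrant2) {ξ : ℝ} (hξ : 0 ≤ ξ) :
    BddBelow (dot2 v '' (ξ • newtonPoly f)) := by
  refine ⟨0, ?_⟩
  rintro r ⟨u, ⟨n, hn, rfl⟩, rfl⟩
  rw [show dot2 v ((fun x => ξ • x) n) = ξ * dot2 v n from dot2_smul_right v ξ n]
  exact mul_nonneg hξ (dot2_nonneg hv (newtonPoly_subset_quadrant f hn))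

/-- A convex set with nonempty interior is contained in the closure of its interior. -/
lemma convex_subset_closure_interior {C : Set (ℝ × ℝ)} (hC : Convex ℝ C)
    (h : (interior C).Nonempty) : C ⊆ closure (interior C) := by
  obtain ⟨y, hy⟩ := h
  intro x hx
  have key : ∀ n : ℕ, (1 - 1/(n+1 : ℝ)) • x + (1/(n+1 : ℝ)) • y ∈ interior C := by
    intro n
    refine hC.combo_closure_interior_mem_interior (subset_closure hx) hy ?_ ?_ (by ring)
    · have : 1/(n+1 : ℝ) ≤ 1 := by
        rw [div_le_one (by positivity)]; linarith [Nat.cast_nonneg (α := ℝ) n]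
      linarith
    · positivity
  have ht : Filter.Tendsto (fun n : ℕ => 1/(n+1 : ℝ)) Filter.atTop (nhds 0) :=
    tendsto_one_div_add_atTop_nhds_zero_nat
  have hcont : Continuous (fun t : ℝ => (1 - t) • x + t • y) := by continuity
  have hts : Filter.Tendsto (fun n : ℕ => (1 - 1/(n+1 : ℝ)) • x + (1/(n+1 : ℝ)) • y)
      Filter.atTop (nhds x) := by
    have := (hcont.tendsto 0).comp ht
    simpa [Function.comp_def] using this
  exact mem_closure_of_tendsto hts (Filter.Eventually.of_forall key)

/-- If `c ≤ t * r` for all `t ≥ 0`, then `0 ≤ r`. -/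
lemma nonneg_of_forall_le_mul {c r : ℝ} (h : ∀ t : ℝ, 0 ≤ t → c ≤ t * r) : 0 ≤ r := by
  by_contra hr
  push_neg at hr
  have ht : (0 : ℝ) ≤ max 0 ((c - 1)/r) := le_max_left _ _
  have h1 : max 0 ((c - 1)/r) * r ≤ ((c - 1)/r) * r :=
    mul_le_mul_of_nonpos_right (le_max_right _ _) hr.le
  rw [div_mul_cancel₀ _ hr.ne] at h1
  linarith [h _ ht]

/-- For a nonempty finite A ⊆ ℝ≥0² and ξ > 0, the Minkowski sum A + ℝ≥0² is
contained in the interior of ξ·𝒩(f) iff min_{a∈A}⟨v,a⟩ > ξ·Φ_{𝒩(f)}(v) for all nonzero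
v ∈ ℝ≥0². -/
theorem inclusion_iff_all_normals (f : MvPowerSeries (Fin 2) ℂ) (hf : f ≠ 0)
    (A : Finset (ℝ × ℝ)) (hA : A.Nonempty) (hAq : (↑A : Set (ℝ × ℝ)) ⊆ quadrant2)
    (ξ : ℚ) (hξ : 0 < ξ) :
    ((↑A : Set (ℝ × ℝ)) + quadrant2 ⊆ interior ((ξ : ℝ) • newtonPoly f)) ↔
      ∀ v ∈ quadrant2, v ≠ 0 →
        (ξ : ℝ) * suppFn f v < (A.image (fun a => dot2 v a)).min' (hA.image _) := by
  have hξR : (0 : ℝ) < (ξ : ℝ) := by exact_mod_cast hξ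
  set C : Set (ℝ × ℝ) := (ξ : ℝ) • newtonPoly f with hCdef
  have hCne : C.Nonempty := (newtonPoly_nonempty hf).smul_set
  have hCcvx : Convex ℝ C := (newtonPoly_convex f).smul _
  constructor
  · -- forward direction
    intro hincl v hv hv0
    obtain ⟨a, haA, hamin⟩ := Finset.mem_image.mp
      ((A.image (fun a => dot2 v a)).min'_mem (hA.image _))
    rw [← hamin]
    have haI : a ∈ interior C := hincl ⟨a, haA, 0, quadrant2_zero_mem, add_zero a⟩
    obtain ⟨ε, hε, hball⟩ := Metric.isOpen_iff.mp isOpen_interior a haI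
    set K : ℝ := |v.1| + |v.2| + 1 with hK
    have hK1 : (1 : ℝ) ≤ K := by
      rw [hK]; linarith [abs_nonneg v.1, abs_nonneg v.2]
    set δ : ℝ := ε / (2 * K) with hδ
    have hδpos : 0 < δ := by
      rw [hδ]; positivity
    have h1 : |δ| * |v.1| < ε := by
      rw [abs_of_pos hδpos, hδ]
      have hlt : |v.1| < 2 * K := by
        rw [hK]; linarith [abs_nonneg v.1, abs_nonneg v.2]
      calc ε / (2 * K) * |v.1| < ε / (2 * K) * (2 * K) := by
            apply mul_lt_mul_of_pos_left hlt (by positivity)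
        _ = ε := by field_simp
    have h2 : |δ| * |v.2| < ε := by
      rw [abs_of_pos hδpos, hδ]
      have hlt : |v.2| < 2 * K := by
        rw [hK]; linarith [abs_nonneg v.1, abs_nonneg v.2]
      calc ε / (2 * K) * |v.2| < ε / (2 * K) * (2 * K) := by
            apply mul_lt_mul_of_pos_left hlt (by positivity)
        _ = ε := by field_simp
    have hmem : a - δ • v ∈ C := by
      refine interior_subset (hball ?_)
      rw [Metric.mem_ball, Prod.dist_eq]
      apply max_lt
      · simpa [Real.dist_eq, abs_sub_comm, abs_mul] using h1
      · simpa [Real.dist_eq, abs_sub_comm, abs_mul] using h2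
    have hsq : 0 < v.1 * v.1 + v.2 * v.2 := by
      by_contra h
      push_neg at h
      have e1 : v.1 * v.1 = 0 :=
        le_antisymm (by nlinarith [mul_self_nonneg v.2]) (mul_self_nonneg v.1)
      have e2 : v.2 * v.2 = 0 :=
        le_antisymm (by nlinarith [mul_self_nonneg v.1]) (mul_self_nonneg v.2)
      exact hv0 (Prod.ext (mul_self_eq_zero.mp e1) (mul_self_eq_zero.mp e2))
    have hval : dot2 v (a - δ • v) = dot2 v a - δ * (v.1 * v.1 + v.2 * v.2) := by
      simp only [dot2, Prod.fst_sub, Prod.snd_sub, Prod.smul_fst, Prod.smul_snd, smul_eq_mul]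
      ring
    have hle : sInf (dot2 v '' C) ≤ dot2 v (a - δ • v) :=
      csInf_le (hCdef ▸ dot2_smul_newton_bddBelow f hv hξR.le) ⟨_, hmem, rfl⟩
    have hfin : sInf (dot2 v '' C) < dot2 v a := by
      rw [hval] at hle
      nlinarith
    rwa [hCdef, sInf_image_smul_newton f v hξR.le] at hfin
  · -- backward direction
    intro hmin
    rintro x ⟨a, haA, q, hq, rfl⟩
    by_contra hxnot
    obtain ⟨p0, hp0⟩ := newtonPoly_nonempty hf
    have hIntNe : (interior C).Nonempty := by
      have hopen : IsOpen {u : ℝ × ℝ | (ξ : ℝ) * p0.1 < u.1 ∧ (ξ : ℝ) * p0.2 < u.2} :=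
        (isOpen_lt continuous_const continuous_fst).inter
          (isOpen_lt continuous_const continuous_snd)
      have hsub : {u : ℝ × ℝ | (ξ : ℝ) * p0.1 < u.1 ∧ (ξ : ℝ) * p0.2 < u.2} ⊆ C := by
        intro u hu
        refine ⟨p0 + ((ξ : ℝ)⁻¹ • u - p0), newtonPoly_add_quadrant_mem hp0 ?_, ?_⟩
        · constructor
          · simp only [Prod.fst_sub, Prod.smul_fst, smul_eq_mul]
            rw [sub_nonneg, ← mul_le_mul_iff_right₀ hξR, mul_inv_cancel_left₀ hξR.ne']
            exact hu.1.le
          · simp only [Prod.snd_sub, Prod.smul_snd, smul_eq_mul]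
            rw [sub_nonneg, ← mul_le_mul_iff_right₀ hξR, mul_inv_cancel_left₀ hξR.ne']
            exact hu.2.le
        · show (ξ : ℝ) • (p0 + ((ξ : ℝ)⁻¹ • u - p0)) = u
          have he : p0 + ((ξ : ℝ)⁻¹ • u - p0) = (ξ : ℝ)⁻¹ • u := by abel
          rw [he, smul_inv_smul₀ hξR.ne']
      refine ⟨((ξ : ℝ) * p0.1 + 1, (ξ : ℝ) * p0.2 + 1),
        interior_maximal hsub hopen ⟨?_, ?_⟩⟩ <;> simp
    obtain ⟨ℓ, hℓ⟩ := geometric_hahn_banach_open_point hCcvx.interior isOpen_interior hxnot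
    have hℓC : ∀ c ∈ C, ℓ c ≤ ℓ (a + q) := by
      intro c hc
      have hclosed : IsClosed {u : ℝ × ℝ | ℓ u ≤ ℓ (a + q)} :=
        isClosed_le ℓ.continuous continuous_const
      have hsub2 : closure (interior C) ⊆ {u : ℝ × ℝ | ℓ u ≤ ℓ (a + q)} :=
        closure_minimal (fun u hu => (hℓ u hu).le) hclosed
      exact hsub2 (convex_subset_closure_interior hCcvx hIntNe hc)
    set v : ℝ × ℝ := (-ℓ (1, 0), -ℓ (0, 1)) with hv
    have hrep : ∀ u : ℝ × ℝ, dot2 v u = -ℓ u := by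
      intro u
      have hu : u = u.1 • ((1 : ℝ), (0 : ℝ)) + u.2 • ((0 : ℝ), (1 : ℝ)) := by
        ext <;> simp
      rw [hv]
      conv_rhs => rw [hu]
      rw [map_add, map_smul, map_smul, smul_eq_mul, smul_eq_mul]
      simp only [dot2]
      ring
    have hvC : ∀ c ∈ C, dot2 v (a + q) ≤ dot2 v c := by
      intro c hc
      have h := hℓC c hc
      rw [hrep, hrep]
      linarith
    obtain ⟨c0, hc0⟩ := hCne
    have hvQ : v ∈ quadrant2 := by
      constructor
      · refine nonneg_of_forall_le_mul (c := dot2 v (a + q) - dot2 v c0) fun t ht => ?_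
        have hmem : c0 + (t, 0) ∈ C :=
          smul_newton_add_quadrant_mem hξR hc0 ⟨ht, le_refl 0⟩
        have h := hvC _ hmem
        have h' : dot2 v (c0 + (t, 0)) = dot2 v c0 + dot2 v (t, 0) := dot2_add_right _ _ _
        have ht0 : dot2 v (t, 0) = t * v.1 := by
          simp [dot2, mul_comm]
        linarith
      · refine nonneg_of_forall_le_mul (c := dot2 v (a + q) - dot2 v c0) fun t ht => ?_
        have hmem : c0 + (0, t) ∈ C :=
          smul_newton_add_quadrant_mem hξR hc0 ⟨le_refl 0, ht⟩
        have h := hvC _ hmem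
        have h' : dot2 v (c0 + (0, t)) = dot2 v c0 + dot2 v (0, t) := dot2_add_right _ _ _
        have ht0 : dot2 v (0, t) = t * v.2 := by
          simp [dot2, mul_comm]
        linarith
    have hvne : v ≠ 0 := by
      intro h
      obtain ⟨y0, hy0⟩ := hIntNe
      have h0 : ∀ u : ℝ × ℝ, ℓ u = 0 := by
        intro u
        have hu := hrep u
        rw [h] at hu
        simp only [dot2, Prod.fst_zero, Prod.snd_zero, zero_mul, add_zero] at hu
        linarith
      have hc := hℓ y0 hy0
      rw [h0, h0] at hc
      exact lt_irrefl 0 hc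
    have hstrict := hmin v hvQ hvne
    have h1 : (A.image (fun a => dot2 v a)).min' (hA.image _) ≤ dot2 v a :=
      Finset.min'_le _ _ (Finset.mem_image_of_mem _ haA)
    have h2 : dot2 v a ≤ dot2 v (a + q) := by
      rw [dot2_add_right]
      linarith [dot2_nonneg hvQ hq]
    have h3 : dot2 v (a + q) ≤ sInf (dot2 v '' C) := by
      have hne : (dot2 v '' C).Nonempty := ⟨dot2 v c0, c0, hc0, rfl⟩
      apply le_csInf hne
      rintro r ⟨c, hc, rfl⟩
      exact hvC c hc
    rw [hCdef, sInf_image_smul_newton f v hξR.le] at h3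
    linarith
end
end

section
/- Let f ∈ ℂ[[x,y]] be a nonzero formal power series. Then there exists a finite set V of nonzero vectors in ℤ≥0², depending only on f, such that for every nonempty finite subset A ⊆ ℝ≥0² and every rational number ξ > 0 the following are equivalent: (a) A + ℝ≥0² is contained in the interior of ξ·𝒩(f); (b) for every v ∈ V one has min_{a∈A} ⟨v,a⟩ > ξ·Φ_{𝒩(f)}(v). In other words, checking the strict support-function inequalities at the finitely many primitive integral normal vectors of the Newton fan of f suffices to verify the inclusion of Newton polygons. -/
open scoped Pointwise

noncomputable section

namespace NewtonAux

open Finset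

def toR (p : ℕ × ℕ) : ℝ × ℝ := ((p.1 : ℝ), (p.2 : ℝ))

def slope (v : ℝ × ℝ) : ℝ := v.2 / (v.1 + v.2)

lemma quad_pos {v : ℝ × ℝ} (hv : v ∈ quadrant2) (hv0 : v ≠ 0) : 0 < v.1 + v.2 := by
  rcases hv with ⟨h1, h2⟩
  rcases lt_or_eq_of_le h1 with h | h
  · linarith
  rcases lt_or_eq_of_le h2 with h' | h'
  · linarith
  · exact absurd (Prod.ext_iff.mpr ⟨h.symm, h'.symm⟩) hv0

lemma slope_nonneg {v : ℝ × ℝ} (hv : v ∈ quadrant2) (hv0 : v ≠ 0) : 0 ≤ slope v :=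
  div_nonneg hv.2 (quad_pos hv hv0).le

lemma slope_le_one {v : ℝ × ℝ} (hv : v ∈ quadrant2) (hv0 : v ≠ 0) : slope v ≤ 1 :=
  (div_le_one (quad_pos hv hv0)).2 (by linarith [hv.1])

lemma slope_le_slope_iff {v w : ℝ × ℝ} (hv : v ∈ quadrant2) (hv0 : v ≠ 0)
    (hw : w ∈ quadrant2) (hw0 : w ≠ 0) :
    slope v ≤ slope w ↔ v.2 * w.1 ≤ v.1 * w.2 := by
  unfold slope
  rw [div_le_div_iff₀ (quad_pos hv hv0) (quad_pos hw hw0)]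
  constructor <;> intro h <;> nlinarith

lemma slope_lt_slope_iff {v w : ℝ × ℝ} (hv : v ∈ quadrant2) (hv0 : v ≠ 0)
    (hw : w ∈ quadrant2) (hw0 : w ≠ 0) :
    slope v < slope w ↔ v.2 * w.1 < v.1 * w.2 := by
  unfold slope
  rw [div_lt_div_iff₀ (quad_pos hv hv0) (quad_pos hw hw0)]
  constructor <;> intro h <;> nlinarith

lemma slope_smul {v w : ℝ × ℝ} {c : ℝ} (hc : 0 < c) (h1 : w.1 = c * v.1) (h2 : w.2 = c * v.2) :
    slope w = slope v := by
  unfold slope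
  rw [h1, h2, ← mul_add, mul_div_mul_left _ _ (ne_of_gt hc)]

lemma parallel_of_slope_eq {v w : ℝ × ℝ} (hv : v ∈ quadrant2) (hv0 : v ≠ 0)
    (hw : w ∈ quadrant2) (hw0 : w ≠ 0) (h : slope v = slope w) :
    ∃ c : ℝ, 0 < c ∧ w.1 = c * v.1 ∧ w.2 = c * v.2 := by
  have hv' := quad_pos hv hv0
  have hw' := quad_pos hw hw0
  refine ⟨(w.1 + w.2) / (v.1 + v.2), by positivity, ?_, ?_⟩
  · have := h
    unfold slope at this
    field_simp at this ⊢
    nlinarith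
  · have := h
    unfold slope at this
    field_simp at this ⊢
    nlinarith

lemma decomp {r1 r2 v : ℝ × ℝ} (h1q : r1 ∈ quadrant2) (h10 : r1 ≠ 0)
    (h2q : r2 ∈ quadrant2) (h20 : r2 ≠ 0) (hvq : v ∈ quadrant2) (hv0 : v ≠ 0)
    (hs1 : slope r1 ≤ slope v) (hs2 : slope v ≤ slope r2) :
    ∃ s t : ℝ, 0 ≤ s ∧ 0 ≤ t ∧ v.1 = s * r1.1 + t * r2.1 ∧ v.2 = s * r1.2 + t * r2.2 := by
  set c : ℝ := r1.1 * r2.2 - r1.2 * r2.1 with hc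
  rcases lt_or_ge 0 c with hcpos | hcnp
  · refine ⟨(v.1 * r2.2 - v.2 * r2.1) / c, (r1.1 * v.2 - r1.2 * v.1) / c, ?_, ?_, ?_, ?_⟩
    · apply div_nonneg _ hcpos.le
      have := (slope_le_slope_iff hvq hv0 h2q h20).1 hs2
      linarith
    · apply div_nonneg _ hcpos.le
      have := (slope_le_slope_iff h1q h10 hvq hv0).1 hs1
      linarith
    · field_simp
      ring
    · field_simp
      ring
  · -- slopes all equal, v parallel to r1
    have h21 : slope r2 ≤ slope r1 := by
      rw [slope_le_slope_iff h2q h20 h1q h10]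
      nlinarith
    have heq : slope r1 = slope v :=
      le_antisymm hs1 (le_trans hs2 h21)
    obtain ⟨s, hs, hv1, hv2⟩ := parallel_of_slope_eq h1q h10 hvq hv0 heq
    exact ⟨s, 0, hs.le, le_refl 0, by rw [hv1]; ring, by rw [hv2]; ring⟩

def Vset (F : Finset (ℕ × ℕ)) : Finset (ℝ × ℝ) :=
  insert ((1 : ℝ), (0 : ℝ)) (insert ((0 : ℝ), (1 : ℝ))
    (((F ×ˢ F).filter (fun q => q.1.1 < q.2.1 ∧ q.2.2 < q.1.2)).image
      (fun q => (((q.1.2 - q.2.2 : ℕ) : ℝ), ((q.2.1 - q.1.1 : ℕ) : ℝ)))))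

lemma e1_mem_Vset (F : Finset (ℕ × ℕ)) : ((1 : ℝ), (0 : ℝ)) ∈ Vset F := by
  simp [Vset]

lemma e2_mem_Vset (F : Finset (ℕ × ℕ)) : ((0 : ℝ), (1 : ℝ)) ∈ Vset F := by
  simp [Vset]

lemma pair_mem_Vset {F : Finset (ℕ × ℕ)} {x y : ℕ × ℕ} (hx : x ∈ F) (hy : y ∈ F)
    (h1 : x.1 < y.1) (h2 : y.2 < x.2) :
    ((x.2 : ℝ) - (y.2 : ℝ), (y.1 : ℝ) - (x.1 : ℝ)) ∈ Vset F := by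
  have c1 : ((x.2 - y.2 : ℕ) : ℝ) = (x.2 : ℝ) - (y.2 : ℝ) := by
    rw [Nat.cast_sub h2.le]
  have c2 : ((y.1 - x.1 : ℕ) : ℝ) = (y.1 : ℝ) - (x.1 : ℝ) := by
    rw [Nat.cast_sub h1.le]
  unfold Vset
  apply Finset.mem_insert_of_mem
  apply Finset.mem_insert_of_mem
  apply Finset.mem_image.2
  exact ⟨(x, y), Finset.mem_filter.2 ⟨Finset.mem_product.2 ⟨hx, hy⟩, h1, h2⟩,
    by rw [c1, c2]⟩

lemma Vset_props (F : Finset (ℕ × ℕ)) :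
    ∀ v ∈ Vset F, v ≠ 0 ∧ v ∈ quadrant2 ∧ ∃ m n : ℕ, v = ((m : ℝ), (n : ℝ)) := by
  intro v hv
  unfold Vset at hv
  rcases Finset.mem_insert.1 hv with rfl | hv
  · exact ⟨by simp [Prod.ext_iff], ⟨by norm_num, by norm_num⟩, 1, 0, by norm_num⟩
  rcases Finset.mem_insert.1 hv with rfl | hv
  · exact ⟨by simp [Prod.ext_iff], ⟨by norm_num, by norm_num⟩, 0, 1, by norm_num⟩
  obtain ⟨q, hq, rfl⟩ := Finset.mem_image.1 hv
  obtain ⟨-, h1, h2⟩ := Finset.mem_filter.1 hq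
  refine ⟨?_, ⟨by positivity, by positivity⟩, _, _, rfl⟩
  have : 0 < q.1.2 - q.2.2 := Nat.sub_pos_of_lt h2
  simp only [Prod.ext_iff, Prod.fst, Prod.snd, ne_eq, not_and]
  intro h
  exfalso
  have : ((q.1.2 - q.2.2 : ℕ) : ℝ) ≠ 0 := by positivity
  exact this h

lemma perp_cases {x y : ℕ × ℕ} {w : ℝ × ℝ} (hw : w ∈ quadrant2) (hw0 : w ≠ 0)
    (hxy : x ≠ y)
    (hperp : w.1 * ((x.1 : ℝ) - (y.1 : ℝ)) + w.2 * ((x.2 : ℝ) - (y.2 : ℝ)) = 0) :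
    ∃ c : ℝ, 0 < c ∧
      ((w.1 = c * 1 ∧ w.2 = c * 0) ∨ (w.1 = c * 0 ∧ w.2 = c * 1) ∨
       (x.1 < y.1 ∧ y.2 < x.2 ∧ w.1 = c * ((x.2 : ℝ) - (y.2 : ℝ)) ∧
          w.2 = c * ((y.1 : ℝ) - (x.1 : ℝ))) ∨
       (y.1 < x.1 ∧ x.2 < y.2 ∧ w.1 = c * ((y.2 : ℝ) - (x.2 : ℝ)) ∧
          w.2 = c * ((x.1 : ℝ) - (y.1 : ℝ)))) := by
  obtain ⟨hw1, hw2⟩ := hw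
  have hne : ¬ (w.1 = 0 ∧ w.2 = 0) := fun h => hw0 (Prod.ext_iff.mpr h)
  rcases Nat.lt_trichotomy x.1 y.1 with h1 | h1 | h1
  · have h1R : (x.1 : ℝ) < (y.1 : ℝ) := by exact_mod_cast h1
    rcases Nat.lt_trichotomy x.2 y.2 with h2 | h2 | h2
    · -- x < y componentwise : contradiction
      exfalso
      have h2R : (x.2 : ℝ) < (y.2 : ℝ) := by exact_mod_cast h2
      have hw1' : w.1 = 0 := by nlinarith
      have hw2' : w.2 = 0 := by nlinarith
      exact hne ⟨hw1', hw2'⟩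
    · -- x.2 = y.2, x.1 < y.1 : w ∝ e2
      have h2R : (x.2 : ℝ) = (y.2 : ℝ) := by exact_mod_cast h2
      have hw1' : w.1 = 0 := by
        have : w.1 * ((x.1 : ℝ) - (y.1 : ℝ)) = 0 := by rw [h2R] at hperp; linarith
        rcases mul_eq_zero.1 this with h | h
        · exact h
        · linarith
      have hw2' : 0 < w.2 := by
        rcases lt_or_eq_of_le hw2 with h | h
        · exact h
        · exact absurd ⟨hw1', h.symm⟩ hne
      exact ⟨w.2, hw2', Or.inr (Or.inl ⟨by rw [hw1']; ring, by ring⟩)⟩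
    · -- x.1 < y.1, y.2 < x.2 : case 3
      have h2R : (y.2 : ℝ) < (x.2 : ℝ) := by exact_mod_cast h2
      have hw1' : 0 < w.1 := by
        rcases lt_or_eq_of_le hw1 with h | h
        · exact h
        · exfalso
          have : w.2 * ((x.2 : ℝ) - (y.2 : ℝ)) = 0 := by rw [← h] at hperp; linarith
          rcases mul_eq_zero.1 this with h' | h'
          · exact hne ⟨h.symm, h'⟩
          · linarith
      refine ⟨w.1 / ((x.2 : ℝ) - (y.2 : ℝ)), div_pos hw1' (by linarith), Or.inr (Or.inr (Or.inl
        ⟨h1, h2, ?_, ?_⟩))⟩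
      · rw [div_mul_eq_mul_div, mul_div_assoc, div_self (by linarith), mul_one]
      · rw [div_mul_eq_mul_div, eq_div_iff (by linarith : (x.2:ℝ) - (y.2:ℝ) ≠ 0)]
        linear_combination hperp
  · -- x.1 = y.1 : w ∝ e1
    have h1R : (x.1 : ℝ) = (y.1 : ℝ) := by exact_mod_cast h1
    have h2 : x.2 ≠ y.2 := by
      intro h; exact hxy (Prod.ext_iff.mpr ⟨h1, h⟩)
    have h2R : (x.2 : ℝ) ≠ (y.2 : ℝ) := by exact_mod_cast h2
    have hw2' : w.2 = 0 := by
      have : w.2 * ((x.2 : ℝ) - (y.2 : ℝ)) = 0 := by rw [h1R] at hperp; linarith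
      rcases mul_eq_zero.1 this with h | h
      · exact h
      · exact absurd (by linarith : (x.2:ℝ) = (y.2:ℝ)) h2R
    have hw1' : 0 < w.1 := by
      rcases lt_or_eq_of_le hw1 with h | h
      · exact h
      · exact absurd ⟨h.symm, hw2'⟩ hne
    exact ⟨w.1, hw1', Or.inl ⟨by ring, by rw [hw2']; ring⟩⟩
  · have h1R : (y.1 : ℝ) < (x.1 : ℝ) := by exact_mod_cast h1
    rcases Nat.lt_trichotomy x.2 y.2 with h2 | h2 | h2
    · -- y.1 < x.1, x.2 < y.2 : case 4
      have h2R : (x.2 : ℝ) < (y.2 : ℝ) := by exact_mod_cast h2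
      have hw1' : 0 < w.1 := by
        rcases lt_or_eq_of_le hw1 with h | h
        · exact h
        · exfalso
          have : w.2 * ((x.2 : ℝ) - (y.2 : ℝ)) = 0 := by rw [← h] at hperp; linarith
          rcases mul_eq_zero.1 this with h' | h'
          · exact hne ⟨h.symm, h'⟩
          · linarith
      refine ⟨w.1 / ((y.2 : ℝ) - (x.2 : ℝ)), div_pos hw1' (by linarith), Or.inr (Or.inr (Or.inr
        ⟨h1, h2, ?_, ?_⟩))⟩
      · rw [div_mul_eq_mul_div, mul_div_assoc, div_self (by linarith), mul_one]
      · rw [div_mul_eq_mul_div, eq_div_iff (by linarith : (y.2:ℝ) - (x.2:ℝ) ≠ 0)]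
        linear_combination -hperp
    · -- x.2 = y.2 : w ∝ e2
      have h2R : (x.2 : ℝ) = (y.2 : ℝ) := by exact_mod_cast h2
      have hw1' : w.1 = 0 := by
        have : w.1 * ((x.1 : ℝ) - (y.1 : ℝ)) = 0 := by rw [h2R] at hperp; linarith
        rcases mul_eq_zero.1 this with h | h
        · exact h
        · linarith
      have hw2' : 0 < w.2 := by
        rcases lt_or_eq_of_le hw2 with h | h
        · exact h
        · exact absurd ⟨hw1', h.symm⟩ hne
      exact ⟨w.2, hw2', Or.inr (Or.inl ⟨by rw [hw1']; ring, by ring⟩)⟩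
    · -- x > y componentwise : contradiction
      exfalso
      have h2R : (y.2 : ℝ) < (x.2 : ℝ) := by exact_mod_cast h2
      have hw1' : w.1 = 0 := by nlinarith
      have hw2' : w.2 = 0 := by nlinarith
      exact hne ⟨hw1', hw2'⟩

set_option maxHeartbeats 1000000 in
lemma exists_common_min (F : Finset (ℕ × ℕ)) (hF : F.Nonempty) {v : ℝ × ℝ}
    (hvq : v ∈ quadrant2) (hv0 : v ≠ 0) :
    ∃ r1 ∈ Vset F, ∃ r2 ∈ Vset F, ∃ s t : ℝ, 0 ≤ s ∧ 0 ≤ t ∧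
      v.1 = s * r1.1 + t * r2.1 ∧ v.2 = s * r1.2 + t * r2.2 ∧
      ∃ a ∈ F, (∀ b ∈ F, dot2 r1 (toR a) ≤ dot2 r1 (toR b)) ∧
               (∀ b ∈ F, dot2 r2 (toR a) ≤ dot2 r2 (toR b)) := by
  classical
  have he1 : ((1 : ℝ), (0 : ℝ)) ∈ Vset F := e1_mem_Vset F
  have he2 : ((0 : ℝ), (1 : ℝ)) ∈ Vset F := e2_mem_Vset F
  have hslope_e1 : slope ((1 : ℝ), (0 : ℝ)) = 0 := by simp [slope]
  have hslope_e2 : slope ((0 : ℝ), (1 : ℝ)) = 1 := by simp [slope]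
  set R1 := (Vset F).filter (fun r => slope r ≤ slope v) with hR1
  set R2 := (Vset F).filter (fun r => slope v ≤ slope r) with hR2
  have hR1ne : R1.Nonempty :=
    ⟨_, Finset.mem_filter.2 ⟨he1, by rw [hslope_e1]; exact slope_nonneg hvq hv0⟩⟩
  have hR2ne : R2.Nonempty :=
    ⟨_, Finset.mem_filter.2 ⟨he2, by rw [hslope_e2]; exact slope_le_one hvq hv0⟩⟩
  obtain ⟨r1, hr1R, hmax⟩ := R1.exists_max_image slope hR1ne
  obtain ⟨r2, hr2R, hmin⟩ := R2.exists_min_image slope hR2ne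
  have hr1V : r1 ∈ Vset F := (Finset.mem_filter.1 hr1R).1
  have hr2V : r2 ∈ Vset F := (Finset.mem_filter.1 hr2R).1
  have hs1 : slope r1 ≤ slope v := (Finset.mem_filter.1 hr1R).2
  have hs2 : slope v ≤ slope r2 := (Finset.mem_filter.1 hr2R).2
  obtain ⟨h10, h1q, -⟩ := Vset_props F r1 hr1V
  obtain ⟨h20, h2q, -⟩ := Vset_props F r2 hr2V
  obtain ⟨s, t, hs, ht, hv1, hv2⟩ := decomp h1q h10 h2q h20 hvq hv0 hs1 hs2
  obtain ⟨a0, ha0F, ha0min⟩ := F.exists_min_image (fun b => dot2 r1 (toR b)) hF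
  set F1 := F.filter (fun b => dot2 r1 (toR b) ≤ dot2 r1 (toR a0)) with hF1
  have hF1ne : F1.Nonempty := ⟨a0, Finset.mem_filter.2 ⟨ha0F, le_refl _⟩⟩
  obtain ⟨a, haF1, hamin2⟩ := F1.exists_min_image (fun b => dot2 r2 (toR b)) hF1ne
  have haF : a ∈ F := (Finset.mem_filter.1 haF1).1
  have hamin1 : ∀ b ∈ F, dot2 r1 (toR a) ≤ dot2 r1 (toR b) := fun b hb =>
    le_trans (Finset.mem_filter.1 haF1).2 (ha0min b hb)
  refine ⟨r1, hr1V, r2, hr2V, s, t, hs, ht, hv1, hv2, a, haF, hamin1, ?_⟩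
  intro b hb
  by_contra hlt
  push_neg at hlt
  have hr1ab : dot2 r1 (toR a) < dot2 r1 (toR b) := by
    rcases lt_or_eq_of_le (hamin1 b hb) with h | h
    · exact h
    · exfalso
      have hbF1 : b ∈ F1 := Finset.mem_filter.2 ⟨hb, h ▸ (Finset.mem_filter.1 haF1).2⟩
      exact absurd (hamin2 b hbF1) (not_le.2 hlt)
  set α : ℝ := dot2 r1 (toR a) - dot2 r1 (toR b) with hα
  set β : ℝ := dot2 r2 (toR a) - dot2 r2 (toR b) with hβ
  have hαneg : α < 0 := by rw [hα]; linarith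
  have hβpos : 0 < β := by rw [hβ]; linarith
  have hβα : 0 < β - α := by linarith
  set τ : ℝ := -α / (β - α) with hτ
  have hτ0 : 0 < τ := by apply div_pos <;> linarith
  have hτ1 : τ < 1 := by rw [hτ, div_lt_one hβα]; linarith
  set w : ℝ × ℝ := ((1 - τ) * r1.1 + τ * r2.1, (1 - τ) * r1.2 + τ * r2.2) with hwdef
  have hp1 : (0:ℝ) ≤ (1 - τ) * r1.1 := mul_nonneg (by linarith) h1q.1
  have hp2 : (0:ℝ) ≤ τ * r2.1 := mul_nonneg hτ0.le h2q.1
  have hp3 : (0:ℝ) ≤ (1 - τ) * r1.2 := mul_nonneg (by linarith) h1q.2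
  have hp4 : (0:ℝ) ≤ τ * r2.2 := mul_nonneg hτ0.le h2q.2
  have hwq : w ∈ quadrant2 := ⟨by simp only [hwdef]; linarith, by simp only [hwdef]; linarith⟩
  have hw0 : w ≠ 0 := by
    intro h
    obtain ⟨hA, hB⟩ := Prod.ext_iff.1 h
    simp only [hwdef] at hA hB
    have e1 : (1 - τ) * r1.1 = 0 := by simp at hA; linarith
    have e2 : (1 - τ) * r1.2 = 0 := by simp at hB; linarith
    have hr11 : r1.1 = 0 := by
      rcases mul_eq_zero.1 e1 with h' | h'
      · linarith
      · exact h'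
    have hr12 : r1.2 = 0 := by
      rcases mul_eq_zero.1 e2 with h' | h'
      · linarith
      · exact h'
    exact h10 (Prod.ext_iff.2 ⟨hr11, hr12⟩)
  have hab : a ≠ b := by
    intro h
    rw [h] at hr1ab
    exact lt_irrefl _ hr1ab
  have hkey : (1 - τ) * α + τ * β = 0 := by
    rw [hτ]
    field_simp
    ring
  have hperp : w.1 * ((a.1 : ℝ) - (b.1 : ℝ)) + w.2 * ((a.2 : ℝ) - (b.2 : ℝ)) = 0 := by
    have : w.1 * ((a.1 : ℝ) - (b.1 : ℝ)) + w.2 * ((a.2 : ℝ) - (b.2 : ℝ))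
        = (1 - τ) * α + τ * β := by
      simp only [hwdef]
      rw [hα, hβ]
      simp only [dot2, toR]
      ring
    rw [this, hkey]
  obtain ⟨c, hc, hcases⟩ := perp_cases hwq hw0 hab hperp
  -- extract r ∈ Vset F with w = c • r
  have hr : ∃ r ∈ Vset F, w.1 = c * r.1 ∧ w.2 = c * r.2 := by
    rcases hcases with ⟨e1', e2'⟩ | ⟨e1', e2'⟩ | ⟨hh1, hh2, e1', e2'⟩ | ⟨hh1, hh2, e1', e2'⟩
    · exact ⟨((1:ℝ), (0:ℝ)), he1, e1', e2'⟩
    · exact ⟨((0:ℝ), (1:ℝ)), he2, e1', e2'⟩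
    · exact ⟨_, pair_mem_Vset haF hb hh1 hh2, e1', e2'⟩
    · exact ⟨_, pair_mem_Vset hb haF hh1 hh2, e1', e2'⟩
  obtain ⟨r, hrV, wc1, wc2⟩ := hr
  have hslope_wr : slope w = slope r := slope_smul hc wc1 wc2
  have hcross : r1.2 * r2.1 < r1.1 * r2.2 := by
    by_contra hcr
    push_neg at hcr
    have h21 : slope r2 ≤ slope r1 := by
      rw [slope_le_slope_iff h2q h20 h1q h10]
      nlinarith
    have heq : slope r1 = slope r2 := le_antisymm (hs1.trans hs2) h21
    obtain ⟨c', hc', e1', e2'⟩ := parallel_of_slope_eq h1q h10 h2q h20 heq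
    have : β = c' * α := by
      rw [hα, hβ]
      simp only [dot2, toR, e1', e2']
      ring
    have := mul_neg_of_pos_of_neg hc' hαneg
    linarith
  have hlw : slope r1 < slope w := by
    rw [slope_lt_slope_iff h1q h10 hwq hw0]
    simp only [hwdef]
    nlinarith [mul_lt_mul_of_pos_left hcross hτ0]
  have hwr2 : slope w < slope r2 := by
    rw [slope_lt_slope_iff hwq hw0 h2q h20]
    simp only [hwdef]
    nlinarith [mul_lt_mul_of_pos_left hcross (by linarith : (0:ℝ) < 1 - τ)]
  rcases le_or_gt (slope r) (slope v) with hcase | hcase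
  · have : r ∈ R1 := Finset.mem_filter.2 ⟨hrV, hcase⟩
    have := hmax r this
    rw [← hslope_wr] at this
    linarith
  · have : r ∈ R2 := Finset.mem_filter.2 ⟨hrV, hcase.le⟩
    have := hmin r this
    rw [← hslope_wr] at this
    linarith

lemma dickson (S : Set (ℕ × ℕ)) (hS : S.Nonempty) :
    ∃ F : Finset (ℕ × ℕ), ↑F ⊆ S ∧ F.Nonempty ∧
      ∀ d ∈ S, ∃ e ∈ F, e.1 ≤ d.1 ∧ e.2 ≤ d.2 := by
  classical
  set M : Set (ℕ × ℕ) := {p | p ∈ S ∧ ∀ q ∈ S, q ≤ p → q = p} with hM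
  have hpwo : S.IsPWO := by
    have h1 : (Set.univ : Set ℕ).IsPWO :=
      (Set.isWF_univ_iff.2 (⟨wellFounded_lt⟩ : WellFoundedLT ℕ)).isPWO
    have h2 : ((Set.univ : Set ℕ) ×ˢ (Set.univ : Set ℕ)).IsPWO := h1.prod h1
    rw [Set.univ_prod_univ] at h2
    exact h2.mono (Set.subset_univ S)
  have hanti : IsAntichain (· ≤ ·) M := by
    intro p hp q hq hne hle
    exact hne (hp.2 p hp.1 le_rfl ▸ (hq.2 p hp.1 hle))
  have hMfin : M.Finite :=
    hanti.finite_of_partiallyWellOrderedOn (hpwo.mono (fun p hp => hp.1))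
  have hcov : ∀ d ∈ S, ∃ e ∈ M, e ≤ d := by
    intro d hd
    set T : Set ℕ := {n | ∃ q, q ∈ S ∧ q ≤ d ∧ q.1 + q.2 = n} with hT
    have hTne : T.Nonempty := ⟨d.1 + d.2, d, hd, le_rfl, rfl⟩
    obtain ⟨n0, hn0T, hn0min⟩ := wellFounded_lt.has_min T hTne
    obtain ⟨q, hqS, hqd, hqn⟩ := hn0T
    refine ⟨q, ⟨hqS, ?_⟩, hqd⟩
    intro q' hq' hle
    have hq'd : q' ≤ d := hle.trans hqd
    have hmem : q'.1 + q'.2 ∈ T := ⟨q', hq', hq'd, rfl⟩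
    have := hn0min _ hmem
    have hsum : q.1 + q.2 ≤ q'.1 + q'.2 := by
      omega
    obtain ⟨hle1, hle2⟩ := Prod.le_def.1 hle
    have : q'.1 = q.1 ∧ q'.2 = q.2 := by omega
    exact Prod.ext_iff.2 this
  obtain ⟨d0, hd0⟩ := hS
  obtain ⟨e0, he0M, -⟩ := hcov d0 hd0
  refine ⟨hMfin.toFinset, ?_, ⟨e0, hMfin.mem_toFinset.2 he0M⟩, ?_⟩
  · intro p hp
    exact (hMfin.mem_toFinset.1 (by exact_mod_cast hp)).1
  · intro d hd
    obtain ⟨e, heM, hle⟩ := hcov d hd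
    exact ⟨e, hMfin.mem_toFinset.2 heM, Prod.le_def.1 hle⟩

lemma isLinearMap_dot2 (v : ℝ × ℝ) : IsLinearMap ℝ (dot2 v) := by
  constructor
  · intro x y
    simp [dot2]
    ring
  · intro c x
    simp [dot2, Prod.smul_def, smul_eq_mul]
    ring

lemma convex_quadrant : Convex ℝ quadrant2 := by
  have : quadrant2 = {u : ℝ × ℝ | 0 ≤ u.1} ∩ {u : ℝ × ℝ | 0 ≤ u.2} := rfl
  rw [this]
  exact (convex_halfSpace_ge (IsLinearMap.mk (fun x y => rfl) (fun c x => rfl)) 0).inter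
    (convex_halfSpace_ge (IsLinearMap.mk (fun x y => rfl) (fun c x => rfl)) 0)

lemma isClosed_quadrant : IsClosed quadrant2 :=
  (isClosed_Ici.preimage continuous_fst).inter (isClosed_Ici.preimage continuous_snd)

lemma quadrant_add_quadrant : quadrant2 + quadrant2 = quadrant2 := by
  apply Set.Subset.antisymm
  · rintro z ⟨p, hp, q, hq, rfl⟩
    exact ⟨by have := hp.1; have := hq.1; simpa using by linarith,
           by have := hp.2; have := hq.2; simpa using by linarith⟩
  · intro z hz
    exact ⟨z, hz, 0, ⟨le_refl 0, le_refl 0⟩, by simp⟩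

lemma smul_quadrant {c : ℝ} (hc : 0 < c) : c • quadrant2 = quadrant2 := by
  ext z
  simp only [Set.mem_smul_set]
  constructor
  · rintro ⟨q, hq, rfl⟩
    constructor
    · simpa using mul_nonneg hc.le hq.1
    · simpa using mul_nonneg hc.le hq.2
  · intro hz
    refine ⟨c⁻¹ • z, ⟨?_, ?_⟩, by rw [smul_smul, mul_inv_cancel₀ hc.ne', one_smul]⟩
    · simpa using mul_nonneg (inv_nonneg.2 hc.le) hz.1
    · simpa using mul_nonneg (inv_nonneg.2 hc.le) hz.2

lemma smul_set_add' (c : ℝ) (s t : Set (ℝ × ℝ)) : c • (s + t) = c • s + c • t := by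
  ext z
  simp only [Set.mem_smul_set, Set.mem_add]
  constructor
  · rintro ⟨y, ⟨p, hp, q, hq, rfl⟩, rfl⟩
    exact ⟨c • p, ⟨p, hp, rfl⟩, c • q, ⟨q, hq, rfl⟩, (smul_add c p q).symm⟩
  · rintro ⟨p', ⟨p, hp, rfl⟩, q', ⟨q, hq, rfl⟩, rfl⟩
    exact ⟨p + q, ⟨p, hp, q, hq, rfl⟩, smul_add c p q⟩

lemma dot2_smul (v : ℝ × ℝ) (c : ℝ) (z : ℝ × ℝ) : dot2 v (c • z) = c * dot2 v z := by
  simp [dot2, Prod.smul_def, smul_eq_mul]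
  ring

lemma dot2_add (v p q : ℝ × ℝ) : dot2 v (p + q) = dot2 v p + dot2 v q := by
  simp [dot2]
  ring

lemma mem_of_dot (G : Finset (ℝ × ℝ)) (hG : G.Nonempty) (u : ℝ × ℝ)
    (h : ∀ v ∈ quadrant2, ∃ b ∈ G, dot2 v b ≤ dot2 v u) :
    u ∈ convexHull ℝ (↑G : Set (ℝ × ℝ)) + quadrant2 := by
  by_contra hu
  set T : Set (ℝ × ℝ) := convexHull ℝ (↑G : Set (ℝ × ℝ)) + quadrant2 with hT
  have hTconv : Convex ℝ T := (convex_convexHull ℝ _).add convex_quadrant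
  have hTclosed : IsClosed T :=
    isClosed_quadrant.add_left_of_isCompact (G.finite_toSet.isCompact_convexHull (𝕜 := ℝ))
  obtain ⟨l, c, hc1, hc2⟩ := geometric_hahn_banach_point_closed hTconv hTclosed hu
  set v : ℝ × ℝ := (l ((1 : ℝ), (0 : ℝ)), l ((0 : ℝ), (1 : ℝ))) with hv
  have hrep : ∀ z : ℝ × ℝ, l z = dot2 v z := by
    intro z
    have hz : z = z.1 • ((1 : ℝ), (0 : ℝ)) + z.2 • ((0 : ℝ), (1 : ℝ)) := by
      simp [Prod.ext_iff, Prod.smul_def]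
    rw [hz, map_add, map_smul, map_smul]
    simp [dot2, hv, smul_eq_mul]
    ring
  have hTQ : ∀ z ∈ T, ∀ q ∈ quadrant2, z + q ∈ T := by
    rintro z ⟨p, hp, q0, hq0, rfl⟩ q hq
    exact ⟨p, hp, q0 + q, ⟨add_nonneg hq0.1 hq.1, add_nonneg hq0.2 hq.2⟩,
      (add_assoc _ _ _).symm⟩
  obtain ⟨a0, ha0⟩ := hG
  have ha0T : a0 ∈ T :=
    ⟨a0, subset_convexHull ℝ _ (Finset.mem_coe.2 ha0), 0, ⟨le_refl 0, le_refl 0⟩, add_zero _⟩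
  have hla0 : c < l a0 := hc2 a0 ha0T
  have hvq : v ∈ quadrant2 := by
    constructor
    · by_contra hneg
      push_neg at hneg
      set t0 : ℝ := (l a0 - c) / (-v.1) with ht0
      have ht0pos : 0 < t0 := div_pos (by linarith) (by linarith)
      have hbT : a0 + (t0, 0) ∈ T := hTQ a0 ha0T (t0, 0) ⟨ht0pos.le, le_refl 0⟩
      have hcb := hc2 _ hbT
      rw [map_add, hrep (t0, 0)] at hcb
      have hval : dot2 v (t0, 0) = t0 * v.1 := by simp [dot2]; ring
      rw [hval] at hcb
      have hkey : t0 * (-v.1) = l a0 - c := div_mul_cancel₀ _ (by linarith : -v.1 ≠ 0)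
      have h2 : t0 * v.1 = -(l a0 - c) := by linear_combination -hkey
      linarith
    · by_contra hneg
      push_neg at hneg
      set t0 : ℝ := (l a0 - c) / (-v.2) with ht0
      have ht0pos : 0 < t0 := div_pos (by linarith) (by linarith)
      have hbT : a0 + (0, t0) ∈ T := hTQ a0 ha0T (0, t0) ⟨le_refl 0, ht0pos.le⟩
      have hcb := hc2 _ hbT
      rw [map_add, hrep (0, t0)] at hcb
      have hval : dot2 v (0, t0) = t0 * v.2 := by simp [dot2]; ring
      rw [hval] at hcb
      have hkey : t0 * (-v.2) = l a0 - c := div_mul_cancel₀ _ (by linarith : -v.2 ≠ 0)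
      have h2 : t0 * v.2 = -(l a0 - c) := by linear_combination -hkey
      linarith
  obtain ⟨b, hbG, hbd⟩ := h v hvq
  have hbT : b ∈ T :=
    ⟨b, subset_convexHull ℝ _ (Finset.mem_coe.2 hbG), 0, ⟨le_refl 0, le_refl 0⟩, add_zero _⟩
  have h1 : c < l b := hc2 b hbT
  rw [hrep] at h1 hc1
  linarith

lemma interior_halfplane_subset {v : ℝ × ℝ} (hv0 : v ≠ 0) (c : ℝ) :
    interior {z : ℝ × ℝ | c ≤ dot2 v z} ⊆ {z : ℝ × ℝ | c < dot2 v z} := by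
  intro z hz
  have hcz : z ∈ {z : ℝ × ℝ | c ≤ dot2 v z} := interior_subset hz
  rw [Set.mem_setOf_eq] at hcz
  rcases lt_or_eq_of_le hcz with h | h
  · exact h
  exfalso
  rw [mem_interior_iff_mem_nhds, Metric.mem_nhds_iff] at hz
  obtain ⟨ε, hε, hball⟩ := hz
  have hM : 0 < v.1 ^ 2 + v.2 ^ 2 := by
    by_contra hc'
    push_neg at hc'
    have h1 : v.1 = 0 := by nlinarith [sq_nonneg v.1, sq_nonneg v.2]
    have h2 : v.2 = 0 := by nlinarith [sq_nonneg v.1, sq_nonneg v.2]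
    exact hv0 (Prod.ext_iff.2 ⟨h1, h2⟩)
  set δ : ℝ := ε / (2 * (|v.1| + |v.2|) + 2) with hδ
  have hden : 0 < 2 * (|v.1| + |v.2|) + 2 := by positivity
  have hδpos : 0 < δ := div_pos hε hden
  set z' : ℝ × ℝ := (z.1 - δ * v.1, z.2 - δ * v.2) with hz'
  have hdist : dist z' z < ε := by
    rw [Prod.dist_eq]
    have d1 : dist z'.1 z.1 = δ * |v.1| := by
      rw [Real.dist_eq]
      simp only [hz']
      rw [show z.1 - δ * v.1 - z.1 = -(δ * v.1) by ring, abs_neg, abs_mul,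
        abs_of_pos hδpos]
    have d2 : dist z'.2 z.2 = δ * |v.2| := by
      rw [Real.dist_eq]
      simp only [hz']
      rw [show z.2 - δ * v.2 - z.2 = -(δ * v.2) by ring, abs_neg, abs_mul,
        abs_of_pos hδpos]
    have hb : δ * (|v.1| + |v.2|) < ε := by
      rw [hδ, div_mul_eq_mul_div, div_lt_iff₀ hden]
      nlinarith [abs_nonneg v.1, abs_nonneg v.2]
    apply max_lt
    · rw [d1]; nlinarith [abs_nonneg v.1, abs_nonneg v.2, mul_nonneg hδpos.le (abs_nonneg v.2)]
    · rw [d2]; nlinarith [abs_nonneg v.1, abs_nonneg v.2, mul_nonneg hδpos.le (abs_nonneg v.1)]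
  have hz'mem : z' ∈ {z : ℝ × ℝ | c ≤ dot2 v z} := hball (Metric.mem_ball.2 hdist)
  have hcomp : dot2 v z' = dot2 v z - δ * (v.1 ^ 2 + v.2 ^ 2) := by
    simp only [hz', dot2]
    ring
  have : c ≤ dot2 v z - δ * (v.1 ^ 2 + v.2 ^ 2) := by rw [← hcomp]; exact hz'mem
  nlinarith [mul_pos hδpos hM]

end NewtonAux

open NewtonAux

set_option maxHeartbeats 1000000

/-- There is a finite set V of nonzero integral vectors of ℝ≥0², depending only
on f, such that for every nonempty finite A ⊆ ℝ≥0² and every rational ξ > 0, the inclusion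
A + ℝ≥0² ⊆ Int(ξ·𝒩(f)) holds iff min_{a∈A}⟨v,a⟩ > ξ·Φ_{𝒩(f)}(v) for every v ∈ V. -/
theorem inclusion_iff_finitely_many_normals (f : MvPowerSeries (Fin 2) ℂ) (hf : f ≠ 0) :
    ∃ V : Finset (ℝ × ℝ),
      (∀ v ∈ V, v ≠ 0 ∧ v ∈ quadrant2 ∧ ∃ m n : ℕ, v = ((m : ℝ), (n : ℝ))) ∧
      ∀ (A : Finset (ℝ × ℝ)) (hA : A.Nonempty),
        (↑A : Set (ℝ × ℝ)) ⊆ quadrant2 → ∀ ξ : ℚ, 0 < ξ →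
          (((↑A : Set (ℝ × ℝ)) + quadrant2 ⊆ interior ((ξ : ℝ) • newtonPoly f)) ↔
            ∀ v ∈ V,
              (ξ : ℝ) * suppFn f v < (A.image (fun a => dot2 v a)).min' (hA.image _)) := by
  classical
  obtain ⟨d0, hd0⟩ : ∃ d : Fin 2 →₀ ℕ, MvPowerSeries.coeff d f ≠ 0 := by
    by_contra h
    push_neg at h
    exact hf (MvPowerSeries.ext fun d => by rw [h d, map_zero])
  set S : Set (ℕ × ℕ) :=
    {p | ∃ d : Fin 2 →₀ ℕ, MvPowerSeries.coeff d f ≠ 0 ∧ p = (d 0, d 1)} with hSdef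
  obtain ⟨F, hFS, hFne, hFcov⟩ := dickson S ⟨(d0 0, d0 1), d0, hd0, rfl⟩
  have hFsupp : ∀ p ∈ F, toR p ∈ psupp f := by
    intro p hp
    obtain ⟨d, hd, hpd⟩ := hFS (Finset.mem_coe.2 hp)
    exact ⟨d, hd, by rw [hpd]; rfl⟩
  have hsupp_cov : ∀ z ∈ psupp f, ∃ p ∈ F, ((p.1 : ℝ) ≤ z.1 ∧ (p.2 : ℝ) ≤ z.2) := by
    rintro z ⟨d, hd, rfl⟩
    obtain ⟨p, hpF, h1, h2⟩ := hFcov (d 0, d 1) ⟨d, hd, rfl⟩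
    exact ⟨p, hpF, Nat.cast_le.mpr h1, Nat.cast_le.mpr h2⟩
  set md : (ℝ × ℝ) → ℝ :=
    fun v => (F.image (fun p => dot2 v (toR p))).min' (hFne.image _) with hmd
  have mdmem : ∀ v : ℝ × ℝ, ∃ p ∈ F, dot2 v (toR p) = md v := by
    intro v
    have := (F.image (fun p => dot2 v (toR p))).min'_mem (hFne.image _)
    obtain ⟨p, hp, hpe⟩ := Finset.mem_image.1 this
    exact ⟨p, hp, hpe⟩
  have mdle : ∀ (v : ℝ × ℝ), ∀ p ∈ F, md v ≤ dot2 v (toR p) := by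
    intro v p hp
    exact Finset.min'_le _ _ (Finset.mem_image_of_mem _ hp)
  -- (K1) lower bound on the Newton polygon
  have hlow : ∀ v ∈ quadrant2, ∀ u ∈ newtonPoly f, md v ≤ dot2 v u := by
    intro v hv u hu
    obtain ⟨cc, hcc, q, hq, rfl⟩ := hu
    have h1 : cc ∈ {z : ℝ × ℝ | md v ≤ dot2 v z} := by
      apply convexHull_min ?_ (convex_halfSpace_ge (isLinearMap_dot2 v) (md v)) hcc
      intro z hz
      obtain ⟨p, hpF, hp1, hp2⟩ := hsupp_cov z hz
      have h2 : dot2 v (toR p) ≤ dot2 v z := by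
        simp only [dot2, toR]
        nlinarith [hv.1, hv.2]
      exact le_trans (mdle v p hpF) h2
    have h2 : 0 ≤ dot2 v q := add_nonneg (mul_nonneg hv.1 hq.1) (mul_nonneg hv.2 hq.2)
    rw [dot2_add]
    have := h1
    rw [Set.mem_setOf_eq] at this
    linarith
  -- (K2) support function = finite min
  have hsupp_eq : ∀ v ∈ quadrant2, suppFn f v = md v := by
    intro v hv
    obtain ⟨p, hpF, hpmd⟩ := mdmem v
    have hmem : toR p ∈ newtonPoly f :=
      ⟨toR p, subset_convexHull ℝ _ (hFsupp p hpF), 0, ⟨le_refl 0, le_refl 0⟩, add_zero _⟩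
    apply le_antisymm
    · exact csInf_le ⟨md v, by rintro x ⟨u, hu, rfl⟩; exact hlow v hv u hu⟩
        ⟨toR p, hmem, hpmd⟩
    · exact le_csInf ⟨dot2 v (toR p), toR p, hmem, rfl⟩
        (by rintro x ⟨u, hu, rfl⟩; exact hlow v hv u hu)
  -- Newton polygon polyhedral description
  have hNeq : newtonPoly f = convexHull ℝ (toR '' ↑F) + quadrant2 := by
    apply Set.Subset.antisymm
    · have h1 : psupp f ⊆ convexHull ℝ (toR '' ↑F) + quadrant2 := by
        intro z hz
        obtain ⟨p, hpF, h1, h2⟩ := hsupp_cov z hz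
        refine ⟨toR p, subset_convexHull ℝ _ ⟨p, hpF, rfl⟩,
          (z.1 - (p.1 : ℝ), z.2 - (p.2 : ℝ)), ⟨by simpa using h1, by simpa using h2⟩, ?_⟩
        simp [toR, Prod.ext_iff]
      have h2 : convexHull ℝ (psupp f) ⊆ convexHull ℝ (toR '' ↑F) + quadrant2 :=
        convexHull_min h1 ((convex_convexHull ℝ _).add convex_quadrant)
      rintro u ⟨cc, hcc, q, hq, rfl⟩
      obtain ⟨p', hp', q', hq', hpq⟩ := h2 hcc
      exact ⟨p', hp', q' + q, ⟨add_nonneg hq'.1 hq.1, add_nonneg hq'.2 hq.2⟩,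
        by rw [← hpq]; exact (add_assoc p' q' q).symm⟩
    · rintro u ⟨p', hp', q, hq, rfl⟩
      refine ⟨p', convexHull_mono ?_ hp', q, hq, rfl⟩
      rintro z ⟨p, hpF, rfl⟩
      exact hFsupp p hpF
  refine ⟨Vset F, Vset_props F, ?_⟩
  intro A hA hAq ξ hξ
  have hξR : (0 : ℝ) < (ξ : ℝ) := by exact_mod_cast hξ
  -- scaled polygon
  set Gξ : Finset (ℝ × ℝ) := F.image (fun p => (ξ : ℝ) • toR p) with hGξ
  have hGcoe : (↑Gξ : Set (ℝ × ℝ)) = (ξ : ℝ) • (toR '' ↑F) := by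
    rw [hGξ, Finset.coe_image, ← Set.image_smul, Set.image_image]
  have hscale : (ξ : ℝ) • newtonPoly f = convexHull ℝ (↑Gξ : Set (ℝ × ℝ)) + quadrant2 := by
    rw [hNeq, smul_set_add' , smul_quadrant hξR, hGcoe, convexHull_smul]
  -- fan lemma
  have hfan : ∀ u : ℝ × ℝ, (∀ r ∈ Vset F, (ξ : ℝ) * md r ≤ dot2 r u) →
      ∀ v ∈ quadrant2, (ξ : ℝ) * md v ≤ dot2 v u := by
    intro u hu v hv
    by_cases hv0 : v = 0
    · obtain ⟨p, hpF, hpmd⟩ := mdmem v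
      have h1 : md v = 0 := by rw [← hpmd, hv0]; simp [dot2]
      have h2 : dot2 v u = 0 := by rw [hv0]; simp [dot2]
      rw [h1, h2, mul_zero]
    · obtain ⟨r1, hr1, r2, hr2, s, t, hs, ht, e1, e2, a, haF, m1, m2⟩ :=
        exists_common_min F hFne hv hv0
      have heq1 : dot2 r1 (toR a) = md r1 := by
        apply le_antisymm ?_ (mdle r1 a haF)
        apply Finset.le_min'
        intro y hy
        obtain ⟨p, hp, rfl⟩ := Finset.mem_image.1 hy
        exact m1 p hp
      have heq2 : dot2 r2 (toR a) = md r2 := by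
        apply le_antisymm ?_ (mdle r2 a haF)
        apply Finset.le_min'
        intro y hy
        obtain ⟨p, hp, rfl⟩ := Finset.mem_image.1 hy
        exact m2 p hp
      have b1 : (ξ : ℝ) * dot2 r1 (toR a) ≤ dot2 r1 u := by rw [heq1]; exact hu r1 hr1
      have b2 : (ξ : ℝ) * dot2 r2 (toR a) ≤ dot2 r2 u := by rw [heq2]; exact hu r2 hr2
      calc (ξ : ℝ) * md v ≤ (ξ : ℝ) * dot2 v (toR a) :=
            mul_le_mul_of_nonneg_left (mdle v a haF) hξR.le
        _ = s * ((ξ : ℝ) * dot2 r1 (toR a)) + t * ((ξ : ℝ) * dot2 r2 (toR a)) := by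
            simp only [dot2]
            rw [e1, e2]
            ring
        _ ≤ s * dot2 r1 u + t * dot2 r2 u :=
            add_le_add (mul_le_mul_of_nonneg_left b1 hs) (mul_le_mul_of_nonneg_left b2 ht)
        _ = dot2 v u := by
            simp only [dot2]
            rw [e1, e2]
            ring
  constructor
  · -- (a) → (b)
    intro hincl v hvV
    obtain ⟨hv0, hvq, -⟩ := Vset_props F v hvV
    have hstrict : ∀ a ∈ A, (ξ : ℝ) * suppFn f v < dot2 v a := by
      intro a haA
      have haI : a ∈ interior ((ξ : ℝ) • newtonPoly f) :=
        hincl ⟨a, Finset.mem_coe.2 haA, 0, ⟨le_refl 0, le_refl 0⟩, add_zero a⟩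
      have hsub : ((ξ : ℝ) • newtonPoly f) ⊆ {z : ℝ × ℝ | (ξ : ℝ) * md v ≤ dot2 v z} := by
        rintro z ⟨y, hy, rfl⟩
        have h1 := hlow v hvq y hy
        rw [Set.mem_setOf_eq, dot2_smul]
        exact mul_le_mul_of_nonneg_left h1 hξR.le
      have h2 := interior_halfplane_subset hv0 _ (interior_mono hsub haI)
      rw [hsupp_eq v hvq]
      exact h2
    obtain ⟨a, haA, heq⟩ := Finset.mem_image.1
      ((A.image (fun a => dot2 v a)).min'_mem (hA.image _))
    rw [← heq]
    exact hstrict a haA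
  · -- (b) → (a)
    intro hmins
    rintro x ⟨a, haA, q, hq, rfl⟩
    have haA' : a ∈ A := Finset.mem_coe.1 haA
    have hstr : ∀ v ∈ Vset F, (ξ : ℝ) * md v < dot2 v a := by
      intro v hvV
      have h1 := hmins v hvV
      have h2 : (A.image (fun a => dot2 v a)).min' (hA.image _) ≤ dot2 v a :=
        Finset.min'_le _ _ (Finset.mem_image_of_mem _ haA')
      obtain ⟨-, hvq, -⟩ := Vset_props F v hvV
      rw [hsupp_eq v hvq] at h1
      linarith
    set W : Finset ℝ :=
      (Vset F).image (fun v => (dot2 v a - (ξ : ℝ) * md v) / (v.1 + v.2)) with hW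
    have hWne : W.Nonempty := ⟨_, Finset.mem_image_of_mem _ (e1_mem_Vset F)⟩
    set δ : ℝ := W.min' hWne with hδ
    have hδpos : 0 < δ := by
      rw [hδ, Finset.lt_min'_iff]
      intro y hy
      obtain ⟨v, hvV, rfl⟩ := Finset.mem_image.1 hy
      obtain ⟨hv0, hvq, -⟩ := Vset_props F v hvV
      exact div_pos (by linarith [hstr v hvV]) (quad_pos hvq hv0)
    have hdel : ∀ v ∈ Vset F, δ * (v.1 + v.2) ≤ dot2 v a - (ξ : ℝ) * md v := by
      intro v hvV
      obtain ⟨hv0, hvq, -⟩ := Vset_props F v hvV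
      have h1 : δ ≤ (dot2 v a - (ξ : ℝ) * md v) / (v.1 + v.2) :=
        Finset.min'_le _ _ (Finset.mem_image_of_mem _ hvV)
      have hp := quad_pos hvq hv0
      rw [le_div_iff₀ hp] at h1
      linarith
    set u' : ℝ × ℝ := (a.1 - δ, a.2 - δ) with hu'
    have hu'V : ∀ r ∈ Vset F, (ξ : ℝ) * md r ≤ dot2 r u' := by
      intro r hrV
      have h1 := hdel r hrV
      simp only [hu', dot2] at h1 ⊢
      nlinarith [h1]
    have hall := hfan u' hu'V
    have hGne : Gξ.Nonempty := hFne.image _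
    have hmem : u' ∈ convexHull ℝ (↑Gξ : Set (ℝ × ℝ)) + quadrant2 := by
      apply mem_of_dot Gξ hGne u'
      intro v hvq'
      obtain ⟨p, hpF, hpmd⟩ := mdmem v
      refine ⟨(ξ : ℝ) • toR p, Finset.mem_image_of_mem _ hpF, ?_⟩
      rw [dot2_smul, hpmd]
      exact hall v hvq'
    set Qo : Set (ℝ × ℝ) := {z | 0 < z.1 ∧ 0 < z.2} with hQo
    have hQoOpen : IsOpen Qo :=
      (isOpen_Ioi.preimage continuous_fst).inter (isOpen_Ioi.preimage continuous_snd)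
    have hsub2 : (convexHull ℝ (↑Gξ : Set (ℝ × ℝ)) + quadrant2) + Qo ⊆
        convexHull ℝ (↑Gξ : Set (ℝ × ℝ)) + quadrant2 := by
      rintro z ⟨y, ⟨p', hp', q', hq', rfl⟩, w, hw, rfl⟩
      exact ⟨p', hp', q' + w, ⟨add_nonneg hq'.1 hw.1.le, add_nonneg hq'.2 hw.2.le⟩,
        (add_assoc _ _ _).symm⟩
    have hxmem : a + q ∈ (convexHull ℝ (↑Gξ : Set (ℝ × ℝ)) + quadrant2) + Qo := by
      refine ⟨u', hmem, (δ + q.1, δ + q.2),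
        ⟨by have := hq.1; simpa using by linarith, by have := hq.2; simpa using by linarith⟩, ?_⟩
      simp only [hu', Prod.ext_iff, Prod.fst_add, Prod.snd_add]
      constructor <;> ring
    rw [hscale]
    exact interior_maximal hsub2 (IsOpen.add_left hQoOpen) hxmem
end
end
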